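/- arXiv:2009.14099 — 2 statements merged into one kernel-verified Lean document; each statement's English description precedes it below -/
import Mathlib

section
/- Pincherle convolution formula: if F and G are holomorphic functions given by power series with radii of convergence R_F and R_G, and |z| < r·R_G and r < R_F for some r > 0, then (F ⊙ G)(z) = (1/2πi) ∫_{|u|=r} F(u) G(z/u) du/u, where the circle is positively oriented. -/
open Complex

private lemma aux_summable (B : ℕ → ℂ) (s t : ℝ) (hs : 0 ≤ s) (hst : s < t)
    (h : Summable fun n => B n * (t : ℂ) ^ n) : Summable fun n => ‖B n‖ * s ^ n := by
  have ht : 0 < t := lt_of_le_of_lt hs hst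
  obtain ⟨C, hC⟩ := (h.tendsto_atTop_zero.norm).bddAbove_range
  have hCle : ∀ n, ‖B n‖ * t ^ n ≤ C := by
    intro n
    have := hC ⟨n, rfl⟩
    simpa [norm_mul, norm_pow, Complex.norm_real, abs_of_pos ht] using this
  refine Summable.of_nonneg_of_le
    (fun n => mul_nonneg (norm_nonneg _) (pow_nonneg hs _))
    (fun n => ?_)
    ((summable_geometric_of_lt_one (div_nonneg hs ht.le)
      ((div_lt_one ht).2 hst)).mul_left C)
  have hkey : ‖B n‖ * s ^ n = (‖B n‖ * t ^ n) * (s / t) ^ n := by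
    rw [div_pow]; field_simp
  rw [hkey]
  exact mul_le_mul_of_nonneg_right (hCle n) (pow_nonneg (div_nonneg hs ht.le) _)

set_option maxHeartbeats 1600000

/-- Pincherle convolution formula: if `F(w) = Σ Aₙ wⁿ` on `‖w‖ < R_F` and
`G(w) = Σ Bₙ wⁿ` on `‖w‖ < R_G`, and `0 < r < R_F`, `‖z‖ < r·R_G` (i.e. `‖z‖/R_G < r`),
then the Hadamard product satisfies
`(F ⊙ G)(z) = (1/2πi) ∮_{|u|=r} F(u) G(z/u) du/u`. -/
theorem pincherle_convolution (F G : ℂ → ℂ) (A B : ℕ → ℂ) (RF RG r : ℝ) (z : ℂ)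
    (hr : 0 < r) (hrF : r < RF) (hz : ‖z‖ < r * RG)
    (hF : ∀ w : ℂ, ‖w‖ < RF → HasSum (fun n => A n * w ^ n) (F w))
    (hG : ∀ w : ℂ, ‖w‖ < RG → HasSum (fun n => B n * w ^ n) (G w)) :
    ∑' n : ℕ, A n * B n * z ^ n =
      (2 * Real.pi * I)⁻¹ * circleIntegral (fun u => F u * G (z / u) / u) 0 r := by
  set s : ℝ := ‖z‖ / r with hs_def
  have hs0 : 0 ≤ s := div_nonneg (norm_nonneg z) hr.le
  have hsRG : s < RG := (div_lt_iff₀ hr).2 (by rwa [mul_comm] at hz)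
  -- summability of coefficient norms
  set tF : ℝ := (r + RF) / 2 with htF_def
  have htF1 : r < tF := by simp [htF_def]; linarith
  have htF0 : 0 < tF := hr.trans htF1
  have hSA : Summable fun n => ‖A n‖ * r ^ n := by
    refine aux_summable A r tF hr.le htF1 ?_
    exact (hF (tF : ℂ) (by
      rw [Complex.norm_real, Real.norm_eq_abs, abs_of_pos htF0]; simp [htF_def]; linarith)).summable
  set tG : ℝ := (s + RG) / 2 with htG_def
  have htG1 : s < tG := by simp [htG_def]; linarith
  have htG0 : 0 < tG := lt_of_le_of_lt hs0 htG1
  have hSB : Summable fun m => ‖B m‖ * s ^ m := by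
    refine aux_summable B s tG hs0 htG1 ?_
    exact (hG (tG : ℂ) (by
      rw [Complex.norm_real, Real.norm_eq_abs, abs_of_pos htG0]; simp [htG_def]; linarith)).summable
  -- basic facts about circle points
  have hcm : ∀ θ : ℝ, ‖circleMap 0 r θ‖ = r := fun θ => by
    simp [norm_circleMap_zero, abs_of_pos hr]
  have hcm0 : ∀ θ : ℝ, circleMap 0 r θ ≠ 0 := fun θ => circleMap_ne_center hr.ne'
  -- the family of terms
  set f : ℕ × ℕ → ℂ → ℂ :=
    fun p u => (A p.1 * u ^ p.1) * (B p.2 * (z / u) ^ p.2) / u with hf_def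
  -- Step 1: each term integrates to its diagonal value
  have key : ∀ p : ℕ × ℕ, (∮ u in C(0, r), f p u) =
      if p.1 = p.2 then (2 * Real.pi * I) * (A p.1 * B p.1 * z ^ p.1) else 0 := by
    rintro ⟨n, m⟩
    have hcong : Set.EqOn (f (n, m))
        (fun u => (A n * B m * z ^ m) * (u - 0) ^ ((n : ℤ) - m - 1))
        (Metric.sphere (0 : ℂ) r) := by
      intro u hu
      have hu0 : u ≠ 0 := by
        intro h
        rw [Metric.mem_sphere, h, dist_self] at hu
        exact hr.ne hu
      simp only [hf_def, sub_zero]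
      rw [div_pow, zpow_sub₀ hu0, zpow_sub₀ hu0, zpow_natCast, zpow_natCast, zpow_one]
      field_simp
    rw [circleIntegral.integral_congr hr.le hcong, circleIntegral.integral_const_mul]
    by_cases hnm : n = m
    · subst hnm
      rw [if_pos rfl, show ((n : ℤ) - n - 1) = -1 by ring]
      simp only [zpow_neg_one]
      rw [circleIntegral.integral_sub_inv_of_mem_ball (Metric.mem_ball_self hr)]
      ring
    · rw [circleIntegral.integral_sub_zpow_of_ne (by omega) 0 0 r, mul_zero, if_neg hnm]
  -- Step 2: interchange sum and integral
  have hint : HasSum (fun p : ℕ × ℕ => ∮ u in C(0, r), f p u)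
      (∮ u in C(0, r), F u * G (z / u) / u) := by
    have hderiv : deriv (circleMap 0 r) = fun θ => circleMap 0 r θ * I :=
      funext fun θ => deriv_circleMap 0 r θ
    simp only [circleIntegral, hderiv]
    refine intervalIntegral.hasSum_integral_of_dominated_convergence
      (fun p _ => r * ((‖A p.1‖ * r ^ p.1) * ((‖B p.2‖ * s ^ p.2) / r)))
      (fun p => ?_) (fun p => ?_) ?_ ?_ ?_
    · -- measurability
      apply Continuous.aestronglyMeasurable
      refine ((continuous_circleMap 0 r).mul continuous_const).smul ?_
      exact ((continuous_const.mul ((continuous_circleMap 0 r).pow p.1)).mul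
        (continuous_const.mul ((continuous_const.div (continuous_circleMap 0 r)
          hcm0).pow p.2))).div (continuous_circleMap 0 r) hcm0
    · -- bound
      filter_upwards with θ _
      obtain ⟨n, m⟩ := p
      have h1 := hcm θ
      simp only [hf_def, smul_eq_mul, norm_mul, norm_div, norm_pow, norm_I, mul_one, h1]
      refine le_of_eq ?_
      rw [hs_def]
      ring
    · -- summability of bound
      filter_upwards with θ _
      refine Summable.mul_left r ?_
      exact hSA.mul_of_nonneg (hSB.div_const r)
        (fun n => mul_nonneg (norm_nonneg _) (pow_nonneg hr.le _))
        (fun m => div_nonneg (mul_nonneg (norm_nonneg _) (pow_nonneg hs0 _)) hr.le)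
    · exact intervalIntegrable_const
    · -- pointwise HasSum
      filter_upwards with θ _
      have hFu : HasSum (fun n => A n * (circleMap 0 r θ) ^ n) (F (circleMap 0 r θ)) :=
        hF _ (by rw [hcm]; exact hrF)
      have hzu : ‖z / circleMap 0 r θ‖ = s := by rw [norm_div, hcm, hs_def]
      have hGu : HasSum (fun m => B m * (z / circleMap 0 r θ) ^ m) (G (z / circleMap 0 r θ)) :=
        hG _ (by rw [hzu]; exact hsRG)
      have hA' : Summable fun n => ‖A n * (circleMap 0 r θ) ^ n‖ := by
        simpa [norm_mul, norm_pow, hcm θ] using hSA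
      have hB' : Summable fun m => ‖B m * (z / circleMap 0 r θ) ^ m‖ := by
        simpa only [norm_mul, norm_pow, hzu] using hSB
      have hs' : Summable (fun p : ℕ × ℕ => (A p.1 * (circleMap 0 r θ) ^ p.1) *
          (B p.2 * (z / circleMap 0 r θ) ^ p.2)) := (hA'.mul_norm hB').of_norm
      have hmul : HasSum
          (fun p : ℕ × ℕ => (A p.1 * (circleMap 0 r θ) ^ p.1) *
            (B p.2 * (z / circleMap 0 r θ) ^ p.2))
          (F (circleMap 0 r θ) * G (z / circleMap 0 r θ)) :=
        HasSum.mul (f := fun n => A n * (circleMap 0 r θ) ^ n)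
          (g := fun m => B m * (z / circleMap 0 r θ) ^ m) hFu hGu hs'
      have := (hmul.div_const (circleMap 0 r θ)).mul_left (circleMap 0 r θ * I)
      simpa only [hf_def, smul_eq_mul] using this
  -- Step 3: collapse to the diagonal
  have hinj : Function.Injective (fun n : ℕ => ((n, n) : ℕ × ℕ)) := by
    intro a b h
    simpa using congrArg Prod.fst h
  rw [show (fun p : ℕ × ℕ => ∮ u in C(0, r), f p u) =
      (fun p : ℕ × ℕ => if p.1 = p.2 then (2 * Real.pi * I) * (A p.1 * B p.1 * z ^ p.1) else 0)
    from funext key] at hint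
  have h0 : ∀ p : ℕ × ℕ, p ∉ Set.range (fun n : ℕ => ((n, n) : ℕ × ℕ)) →
      (if p.1 = p.2 then (2 * Real.pi * I) * (A p.1 * B p.1 * z ^ p.1) else 0) = 0 := by
    rintro ⟨n, m⟩ hp
    rw [if_neg]
    intro h
    exact hp ⟨n, by simp_all⟩
  have hdiag : HasSum (fun n : ℕ => (2 * Real.pi * I) * (A n * B n * z ^ n))
      (∮ u in C(0, r), F u * G (z / u) / u) := by
    have := (Function.Injective.hasSum_iff hinj h0).2 hint
    simpa [Function.comp_def] using this
  have h2πi : (2 * Real.pi * I : ℂ) ≠ 0 := by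
    simp [Real.pi_ne_zero, I_ne_zero]
  have hfin := hdiag.mul_left (2 * Real.pi * I)⁻¹
  simp only [← mul_assoc, inv_mul_cancel₀ h2πi, one_mul] at hfin
  exact hfin.tsum_eq
end

section
/- Exponential eñe convolution formula: under the same radius conditions as the Pincherle formula, (F ⋆ₑ G)(z) = −(1/2πi) ∫_{|u|=r} F′(u) G(z/u) du. -/
open Complex

/-- Auxiliary summability: if `∑ Aₙ wⁿ` converges for all `‖w‖ < R` and `0 ≤ a < R`,
then `∑ (n+1)‖Aₙ‖ aⁿ` converges. -/
private lemma aux_summable_pow (A : ℕ → ℂ) (R a : ℝ) (ha : 0 ≤ a) (haR : a < R)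
    (h : ∀ w : ℂ, ‖w‖ < R → Summable (fun n => A n * w ^ n)) :
    Summable (fun n : ℕ => ((n : ℝ) + 1) * ‖A n‖ * a ^ n) := by
  obtain ⟨b, hab, hbR⟩ : ∃ b : ℝ, a < b ∧ b < R := ⟨(a + R) / 2, by linarith, by linarith⟩
  have hb0 : 0 < b := lt_of_le_of_lt ha hab
  have hsum : Summable (fun n => A n * (b : ℂ) ^ n) := by
    apply h
    simpa [Complex.norm_real, Real.norm_eq_abs, _root_.abs_of_pos hb0] using hbR
  have htend : Filter.Tendsto (fun n => ‖A n‖ * b ^ n) Filter.atTop (nhds 0) := by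
    have := hsum.tendsto_atTop_zero.norm
    simpa [norm_mul, norm_pow, Complex.norm_real, Real.norm_eq_abs, _root_.abs_of_pos hb0] using this
  obtain ⟨C, hC⟩ : ∃ C, ∀ n, ‖A n‖ * b ^ n ≤ C := by
    obtain ⟨C, hC⟩ := htend.bddAbove_range
    exact ⟨C, fun n => hC (Set.mem_range_self n)⟩
  have hC0 : 0 ≤ C := le_trans (by positivity) (hC 0)
  have hq0 : 0 ≤ a / b := div_nonneg ha hb0.le
  have hq : a / b < 1 := (div_lt_one hb0).2 hab
  have hgeo : Summable (fun n : ℕ => ((n : ℝ) + 1) * (a / b) ^ n) := by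
    have h1 : Summable (fun n : ℕ => (n : ℝ) * (a / b) ^ n) := by
      have := summable_pow_mul_geometric_of_norm_lt_one (R := ℝ) 1
        (r := a / b) (by rwa [Real.norm_eq_abs, _root_.abs_of_nonneg hq0])
      simpa using this
    have h2 : Summable (fun n : ℕ => (a / b) ^ n) := summable_geometric_of_lt_one hq0 hq
    simpa [add_mul, one_mul] using h1.add h2
  apply Summable.of_nonneg_of_le (fun n => by positivity) (fun n => ?_) (hgeo.mul_left C)
  have key : ‖A n‖ * a ^ n ≤ C * (a / b) ^ n := by
    have hbn : (b : ℝ) ^ n ≠ 0 := by positivity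
    have heq : ‖A n‖ * a ^ n = (‖A n‖ * b ^ n) * (a / b) ^ n := by
      rw [div_pow]
      field_simp
    rw [heq]
    exact mul_le_mul_of_nonneg_right (hC n) (by positivity)
  calc ((n : ℝ) + 1) * ‖A n‖ * a ^ n = ((n : ℝ) + 1) * (‖A n‖ * a ^ n) := by ring
    _ ≤ ((n : ℝ) + 1) * (C * (a / b) ^ n) := by
        apply mul_le_mul_of_nonneg_left key (by positivity)
    _ = C * (((n : ℝ) + 1) * (a / b) ^ n) := by ring

/-- Termwise differentiation of a power series. -/
private lemma ofScalars_coeff (A : ℕ → ℂ) (n : ℕ) :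
    (FormalMultilinearSeries.ofScalars ℂ A).coeff n = A n := by
  rw [FormalMultilinearSeries.coeff]
  rw [show (1 : Fin n → ℂ) = fun _ => (1 : ℂ) from rfl]
  rw [FormalMultilinearSeries.ofScalars_apply_eq]
  simp

/-- Termwise differentiation of a power series. -/
private lemma aux_hasSum_deriv (F : ℂ → ℂ) (A : ℕ → ℂ) (R : ℝ)
    (hF : ∀ w : ℂ, ‖w‖ < R → HasSum (fun n => A n * w ^ n) (F w))
    (u : ℂ) (hu : ‖u‖ < R) (hu0 : u ≠ 0) :
    HasSum (fun n : ℕ => ((n : ℂ) + 1) * A (n + 1) * u ^ n) (deriv F u) := by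
  set p : FormalMultilinearSeries ℂ ℂ ℂ := FormalMultilinearSeries.ofScalars ℂ A with hp
  have hR0 : 0 < R := lt_of_le_of_lt (norm_nonneg u) hu
  have hrad : ENNReal.ofReal R ≤ p.radius := by
    apply ENNReal.le_of_forall_nnreal_lt
    intro s hs
    have hsR : (s : ℝ) < R := by
      rw [← ENNReal.ofReal_coe_nnreal] at hs
      exact (ENNReal.ofReal_lt_ofReal_iff hR0).mp hs
    have h1 : Filter.Tendsto (fun n => ‖A n‖ * (s : ℝ) ^ n) Filter.atTop (nhds 0) := by
      have hw : ‖(((s : ℝ) : ℂ))‖ < R := by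
        simpa [Complex.norm_real, Real.norm_eq_abs, _root_.abs_of_nonneg s.coe_nonneg] using hsR
      have := ((hF ((s : ℝ) : ℂ) hw).summable).tendsto_atTop_zero.norm
      simpa [norm_mul, norm_pow, Complex.norm_real, Real.norm_eq_abs,
        _root_.abs_of_nonneg s.coe_nonneg] using this
    apply p.le_radius_of_tendsto (l := 0)
    simpa [hp, FormalMultilinearSeries.ofScalars_norm, ofScalars_coeff] using h1
  have hball : HasFPowerSeriesOnBall F p 0 (ENNReal.ofReal R) := by
    refine ⟨hrad, by simp [ENNReal.ofReal_pos, hR0], ?_⟩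
    intro y hy
    have hy' : ‖y‖ < R := by
      rw [EMetric.mem_ball, edist_zero_right, ← ofReal_norm] at hy
      exact (ENNReal.ofReal_lt_ofReal_iff hR0).mp hy
    have := hF y hy'
    simp only [zero_add]
    simpa [hp, FormalMultilinearSeries.ofScalars_apply_eq, smul_eq_mul, ofScalars_coeff,
      mul_comm] using this
  have hd := hball.fderiv
  have humem : u ∈ Metric.eball (0 : ℂ) (ENNReal.ofReal R) := by
    rw [EMetric.mem_ball, edist_zero_right, ← ofReal_norm]
    exact (ENNReal.ofReal_lt_ofReal_iff hR0).mpr hu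
  have hsum := hd.hasSum humem
  have happ := (ContinuousLinearMap.apply ℂ ℂ (1 : ℂ)).hasSum hsum
  rw [zero_add] at happ
  have hterm : ∀ n : ℕ,
      (ContinuousLinearMap.apply ℂ ℂ (1 : ℂ)) (p.derivSeries n (fun _ => u))
        = ((n : ℂ) + 1) * A (n + 1) * u ^ n := by
    intro n
    have h1 : (p.derivSeries n (fun _ => u)) u = ((n : ℂ) + 1) * A (n + 1) * u ^ (n + 1) := by
      rw [p.derivSeries_apply_diag]
      simp only [hp, FormalMultilinearSeries.ofScalars_apply_eq, smul_eq_mul, nsmul_eq_mul]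
      push_cast
      ring
    have h2 : (p.derivSeries n (fun _ => u)) u = u * (p.derivSeries n (fun _ => u)) 1 := by
      have := (p.derivSeries n (fun _ => u)).map_smul u (1 : ℂ)
      simpa [smul_eq_mul] using this
    show (p.derivSeries n (fun _ => u)) 1 = _
    apply mul_left_cancel₀ hu0
    rw [← h2, h1, pow_succ]
    ring
  have : HasSum (fun n : ℕ => ((n : ℂ) + 1) * A (n + 1) * u ^ n) (fderiv ℂ F u 1) := by
    have := happ
    simp only [hterm] at this
    simpa using this
  rwa [fderiv_apply_one_eq_deriv] at this

set_option maxHeartbeats 2000000 in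
/-- Exponential eñe convolution formula: under the same radius conditions as the
Pincherle formula, `(F ⋆ₑ G)(z) = −(1/2πi) ∮_{|u|=r} F′(u) G(z/u) du`. -/
theorem eneE_convolution (F G : ℂ → ℂ) (A B : ℕ → ℂ) (RF RG r : ℝ) (z : ℂ)
    (hr : 0 < r) (hrF : r < RF) (hz : ‖z‖ < r * RG)
    (hF : ∀ w : ℂ, ‖w‖ < RF → HasSum (fun n => A n * w ^ n) (F w))
    (hG : ∀ w : ℂ, ‖w‖ < RG → HasSum (fun n => B n * w ^ n) (G w)) :
    ∑' n : ℕ, -(n : ℂ) * A n * B n * z ^ n =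
      -((2 * Real.pi * I)⁻¹ * circleIntegral (fun u => deriv F u * G (z / u)) 0 r) := by
  have hRG : 0 < RG := by nlinarith [norm_nonneg z]
  have hzr : ‖z‖ / r < RG := (div_lt_iff₀ hr).2 (by linarith)
  have hc2 : (2 * (Real.pi : ℂ) * I) ≠ 0 := by
    simp [Real.pi_ne_zero, I_ne_zero]
  -- summability facts
  have sa : Summable (fun n : ℕ => ((n : ℝ) + 1) * ‖A (n + 1)‖ * r ^ n) := by
    have h := aux_summable_pow A RF r hr.le hrF (fun w hw => (hF w hw).summable)
    have h' := ((summable_nat_add_iff 1).2 h).mul_left r⁻¹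
    refine Summable.of_nonneg_of_le (fun n => ?_) (fun n => ?_) h'
    · positivity
    · have heq : r⁻¹ * (((↑(n + 1) : ℝ) + 1) * ‖A (n + 1)‖ * r ^ (n + 1))
          = ((n : ℝ) + 2) * ‖A (n + 1)‖ * r ^ n := by
        rw [pow_succ]
        push_cast
        field_simp
        ring
      rw [heq]
      have h1 : ((n : ℝ) + 1) ≤ ((n : ℝ) + 2) := by linarith
      exact mul_le_mul_of_nonneg_right (mul_le_mul_of_nonneg_right h1 (norm_nonneg _))
        (pow_nonneg hr.le n)
  have sb : Summable (fun m : ℕ => ‖B m‖ * (‖z‖ / r) ^ m) := by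
    have h := aux_summable_pow B RG (‖z‖ / r) (by positivity) hzr (fun w hw => (hG w hw).summable)
    refine Summable.of_nonneg_of_le (fun n => ?_) (fun n => ?_) h
    · positivity
    · have key := mul_nonneg (show (0:ℝ) ≤ (n : ℝ) from Nat.cast_nonneg n)
        (mul_nonneg (norm_nonneg (B n))
          (pow_nonneg (div_nonneg (norm_nonneg z) hr.le) n))
      nlinarith [key]
  -- key HasSum for the circle integral
  have key : HasSum
      (fun nm : ℕ × ℕ =>
        ∫ θ in (0:ℝ)..2 * Real.pi,
          deriv (circleMap 0 r) θ •
            ((((nm.1 : ℂ) + 1) * A (nm.1 + 1) * circleMap 0 r θ ^ nm.1) *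
              (B nm.2 * (z / circleMap 0 r θ) ^ nm.2)))
      (circleIntegral (fun u => deriv F u * G (z / u)) 0 r) := by
    rw [circleIntegral]
    have hne : ∀ θ : ℝ, circleMap 0 r θ ≠ 0 := fun θ => circleMap_ne_center hr.ne'
    have hnorm : ∀ θ : ℝ, ‖circleMap 0 r θ‖ = r := by
      intro θ
      simp [norm_circleMap_zero, _root_.abs_of_pos hr]
    apply intervalIntegral.hasSum_integral_of_dominated_convergence
      (bound := fun nm _ => (r * (((nm.1 : ℝ) + 1) * ‖A (nm.1 + 1)‖ * r ^ nm.1)) *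
        (‖B nm.2‖ * (‖z‖ / r) ^ nm.2))
    · intro nm
      apply Continuous.aestronglyMeasurable
      have hc : Continuous (circleMap 0 r) := continuous_circleMap 0 r
      simp only [deriv_circleMap]
      exact ((hc.mul continuous_const).smul
        ((continuous_const.mul (hc.pow nm.1)).mul
          (continuous_const.mul ((continuous_const.div hc hne).pow nm.2))))
    · intro nm
      refine Filter.Eventually.of_forall fun θ _ => ?_
      have h1 : ((nm.1 : ℂ) + 1) = ((nm.1 + 1 : ℕ) : ℂ) := by push_cast; ring
      rw [deriv_circleMap, smul_eq_mul, h1]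
      simp only [norm_mul, norm_pow, norm_div, Complex.norm_natCast, Complex.norm_I,
        hnorm, mul_one]
      apply le_of_eq
      push_cast
      ring
    · refine Filter.Eventually.of_forall fun θ _ => ?_
      exact Summable.mul_of_nonneg (sa.mul_left r) sb
        (fun n => by positivity) (fun m => by positivity)
    · exact intervalIntegrable_const
    · refine Filter.Eventually.of_forall fun θ _ => ?_
      have hu : ‖circleMap 0 r θ‖ = r := hnorm θ
      have hu0 : circleMap 0 r θ ≠ 0 := hne θ
      have h1 : HasSum (fun n : ℕ => ((n : ℂ) + 1) * A (n + 1) * circleMap 0 r θ ^ n)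
          (deriv F (circleMap 0 r θ)) :=
        aux_hasSum_deriv F A RF hF _ (by rw [hu]; exact hrF) hu0
      have h2 : HasSum (fun m : ℕ => B m * (z / circleMap 0 r θ) ^ m)
          (G (z / circleMap 0 r θ)) := hG _ (by rw [norm_div, hu]; exact hzr)
      have hs : Summable (fun nm : ℕ × ℕ =>
          (((nm.1 : ℂ) + 1) * A (nm.1 + 1) * circleMap 0 r θ ^ nm.1) *
            (B nm.2 * (z / circleMap 0 r θ) ^ nm.2)) := by
        refine summable_mul_of_summable_norm
          (f := fun n : ℕ => ((n : ℂ) + 1) * A (n + 1) * circleMap 0 r θ ^ n)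
          (g := fun m : ℕ => B m * (z / circleMap 0 r θ) ^ m) ?_ ?_
        · have heq : (fun n : ℕ => ‖((n : ℂ) + 1) * A (n + 1) * circleMap 0 r θ ^ n‖)
              = fun n : ℕ => ((n : ℝ) + 1) * ‖A (n + 1)‖ * r ^ n := by
            funext n
            have h1 : ((n : ℂ) + 1) = ((n + 1 : ℕ) : ℂ) := by push_cast; ring
            rw [norm_mul, norm_mul, norm_pow, h1, Complex.norm_natCast, hu]
            push_cast
            ring
          rw [heq]; exact sa
        · have heq : (fun m : ℕ => ‖B m * (z / circleMap 0 r θ) ^ m‖)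
              = fun m : ℕ => ‖B m‖ * (‖z‖ / r) ^ m := by
            funext m
            rw [norm_mul, norm_pow, norm_div, hu]
          rw [heq]; exact sb
      exact (h1.mul h2 hs).const_smul _
  -- compute each term integral
  have hterm : ∀ nm : ℕ × ℕ,
      (∫ θ in (0:ℝ)..2 * Real.pi,
          deriv (circleMap 0 r) θ •
            ((((nm.1 : ℂ) + 1) * A (nm.1 + 1) * circleMap 0 r θ ^ nm.1) *
              (B nm.2 * (z / circleMap 0 r θ) ^ nm.2)))
      = (((nm.1 : ℂ) + 1) * A (nm.1 + 1) * B nm.2 * z ^ nm.2) *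
          (if nm.2 = nm.1 + 1 then 2 * Real.pi * I else 0) := by
    rintro ⟨n, m⟩
    have hEq : Set.EqOn
        (fun θ : ℝ => deriv (circleMap 0 r) θ •
            ((((n : ℂ) + 1) * A (n + 1) * circleMap 0 r θ ^ n) *
              (B m * (z / circleMap 0 r θ) ^ m)))
        (fun θ : ℝ => deriv (circleMap 0 r) θ •
            ((((n : ℂ) + 1) * A (n + 1) * B m * z ^ m) * circleMap 0 r θ ^ ((n : ℤ) - m)))
        (Set.uIcc (0:ℝ) (2 * Real.pi)) := by
      intro θ _
      have hu0 : circleMap 0 r θ ≠ 0 := circleMap_ne_center hr.ne'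
      simp only
      congr 1
      rw [zpow_sub₀ hu0, zpow_natCast, zpow_natCast, div_pow]
      field_simp
    rw [intervalIntegral.integral_congr hEq]
    have hci : (∫ θ in (0:ℝ)..2 * Real.pi,
          deriv (circleMap 0 r) θ •
            ((((n : ℂ) + 1) * A (n + 1) * B m * z ^ m) * circleMap 0 r θ ^ ((n : ℤ) - m)))
        = ∮ w in C(0, r), (((n : ℂ) + 1) * A (n + 1) * B m * z ^ m) * w ^ ((n : ℤ) - m) := by
      rw [circleIntegral]
    rw [hci, circleIntegral.integral_const_mul]
    congr 1
    by_cases hm : m = n + 1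
    · subst hm
      have he : (n : ℤ) - (n + 1 : ℕ) = -1 := by push_cast; ring
      rw [he, if_pos rfl]
      have h0 : (0 : ℂ) ∈ Metric.ball (0 : ℂ) r := Metric.mem_ball_self hr
      have := circleIntegral.integral_sub_inv_of_mem_ball h0
      simp only [sub_zero] at this
      rw [← this]
      apply circleIntegral.integral_congr hr.le
      intro w _
      simp [zpow_neg, zpow_one]
    · rw [if_neg hm]
      have hne : (n : ℤ) - m ≠ -1 := by
        intro h
        apply hm
        omega
      have := circleIntegral.integral_sub_zpow_of_ne hne 0 0 r
      simpa using this
  simp only [hterm] at key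
  -- restrict to the diagonal m = n + 1
  have hinj : Function.Injective (fun n : ℕ => ((n, n + 1) : ℕ × ℕ)) := by
    intro a b h
    simpa using congrArg Prod.fst h
  have hzero : ∀ x : ℕ × ℕ, x ∉ Set.range (fun n : ℕ => ((n, n + 1) : ℕ × ℕ)) →
      (((x.1 : ℂ) + 1) * A (x.1 + 1) * B x.2 * z ^ x.2) *
        (if x.2 = x.1 + 1 then 2 * Real.pi * I else 0) = 0 := by
    rintro ⟨a, b⟩ hx
    have : ¬ (b = a + 1) := by
      intro h
      exact hx ⟨a, by simp [h]⟩
    simp [this]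
  have key3 : HasSum
      (fun n : ℕ => (((n : ℂ) + 1) * A (n + 1) * B (n + 1) * z ^ (n + 1)) * (2 * Real.pi * I))
      (circleIntegral (fun u => deriv F u * G (z / u)) 0 r) := by
    have := (Function.Injective.hasSum_iff hinj hzero).2 key
    simpa [Function.comp_def] using this
  -- divide by 2πi and negate
  have key4 : HasSum
      (fun n : ℕ => -((((n : ℂ) + 1) * A (n + 1) * B (n + 1) * z ^ (n + 1))))
      (-((2 * Real.pi * I)⁻¹ * circleIntegral (fun u => deriv F u * G (z / u)) 0 r)) := by
    have h1 := (key3.mul_right ((2 * (Real.pi : ℂ) * I)⁻¹)).neg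
    have heq : ∀ n : ℕ,
        -((((n : ℂ) + 1) * A (n + 1) * B (n + 1) * z ^ (n + 1)) * (2 * Real.pi * I) *
          (2 * (Real.pi : ℂ) * I)⁻¹)
        = -((((n : ℂ) + 1) * A (n + 1) * B (n + 1) * z ^ (n + 1))) := by
      intro n
      rw [mul_assoc, mul_inv_cancel₀ hc2, mul_one]
    simp only [heq] at h1
    rwa [mul_comm] at h1
  -- shift the index
  have final : HasSum (fun n : ℕ => -(n : ℂ) * A n * B n * z ^ n)
      (-((2 * Real.pi * I)⁻¹ * circleIntegral (fun u => deriv F u * G (z / u)) 0 r)) := by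
    have h5 : HasSum (fun n : ℕ => (fun k : ℕ => -(k : ℂ) * A k * B k * z ^ k) (n + 1))
        (-((2 * Real.pi * I)⁻¹ * circleIntegral (fun u => deriv F u * G (z / u)) 0 r)) := by
      have heq : (fun n : ℕ => (fun k : ℕ => -(k : ℂ) * A k * B k * z ^ k) (n + 1))
          = fun n : ℕ => -((((n : ℂ) + 1) * A (n + 1) * B (n + 1) * z ^ (n + 1))) := by
        funext n
        push_cast
        ring
      rw [heq]
      exact key4
    have := (hasSum_nat_add_iff (f := fun k : ℕ => -(k : ℂ) * A k * B k * z ^ k) 1).1 h5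
    simpa using this
  exact final.tsum_eq
end
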